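/- Let X be a compact topological space with a Radon measure μ and let B be a Banach space. Assume the continuous functions K : X² × B → B and L : X² → ℝ₊ satisfy ‖K(t,s,x) − K(t,s,y)‖ ≤ L(t,s)‖x − y‖ and ∫_X L(t,s) dμ(s) < 1 for all t,s ∈ X and x,y ∈ B. Then for every continuous f : X → B the nonlinear integral equation x(t) = f(t) + ∫_X K(t,s,x(s)) dμ(s) has a unique continuous solution x : X → B. -/
import Mathlib

open MeasureTheory

private lemma myaux_integrable {X : Type*} [TopologicalSpace X] [CompactSpace X]
    [MeasurableSpace X] [OpensMeasurableSpace X] (μ : Measure X) [IsFiniteMeasure μ]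
    {E : Type*} [NormedAddCommGroup E] {g : X → E} (hg : Continuous g) :
    Integrable g μ :=
  hg.integrable_of_hasCompactSupport (HasCompactSupport.of_compactSpace _)

private lemma myaux_integral_continuous {X : Type*} [TopologicalSpace X] [CompactSpace X]
    [MeasurableSpace X] [OpensMeasurableSpace X] (μ : Measure X) [IsFiniteMeasure μ]
    {E : Type*} [NormedAddCommGroup E] [NormedSpace ℝ E] :
    Continuous (fun h : C(X, E) => ∫ s, h s ∂μ) := by
  refine (LipschitzWith.of_dist_le_mul (K := (μ Set.univ).toNNReal) (fun h h' => ?_)).continuous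
  rw [dist_eq_norm, ← integral_sub (myaux_integrable μ h.continuous)
    (myaux_integrable μ h'.continuous)]
  calc ‖∫ s, (h s - h' s) ∂μ‖ ≤ dist h h' * (μ Set.univ).toReal :=
        norm_integral_le_of_norm_le_const (by
          filter_upwards with s
          rw [← dist_eq_norm]
          exact ContinuousMap.dist_apply_le_dist s)
    _ = (μ Set.univ).toNNReal * dist h h' := by rw [mul_comm]; rfl

private lemma myaux_parametric {X : Type*} [TopologicalSpace X] [CompactSpace X]
    [MeasurableSpace X] [OpensMeasurableSpace X] (μ : Measure X) [IsFiniteMeasure μ]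
    {E : Type*} [NormedAddCommGroup E] [NormedSpace ℝ E] (g : C(X × X, E)) :
    Continuous (fun t => ∫ s, g (t, s) ∂μ) :=
  (myaux_integral_continuous μ).comp g.curry.continuous

theorem fredholm_type_unique_solution_L_lt_one {X : Type*} [TopologicalSpace X] [CompactSpace X]
    [MeasurableSpace X] [BorelSpace X] (μ : Measure X) [μ.Regular]
    {B : Type*} [NormedAddCommGroup B] [NormedSpace ℝ B] [CompleteSpace B]
    (K : X → X → B → B)
    (hK : Continuous (fun p : (X × X) × B => K p.1.1 p.1.2 p.2))
    (L : X → X → ℝ)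
    (hLcont : Continuous (fun p : X × X => L p.1 p.2))
    (hLpos : ∀ t s : X, 0 < L t s)
    (hLip : ∀ t s : X, ∀ x y : B, ‖K t s x - K t s y‖ ≤ L t s * ‖x - y‖)
    (hint : ∀ t : X, (∫ s, L t s ∂μ) < 1)
    (f : X → B) (hf : Continuous f) :
    ∃! x : X → B, Continuous x ∧ ∀ t : X, x t = f t + ∫ s, K t s (x s) ∂μ := by
  rcases isEmpty_or_nonempty X with hX | hX
  · exact ⟨fun _ => 0, ⟨continuous_const, fun t => isEmptyElim t⟩,
      fun y _ => funext fun t => isEmptyElim t⟩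
  haveI : IsFiniteMeasure μ := ⟨isCompact_univ.measure_lt_top⟩
  -- continuity of the kernel applied to a continuous function
  have hKx : ∀ x : C(X, B), Continuous (fun p : X × X => K p.1 p.2 (x p.2)) := fun x =>
    hK.comp (continuous_id.prodMk (x.continuous.comp continuous_snd))
  have hxcont : ∀ x : C(X, B), Continuous (fun t => ∫ s, K t s (x s) ∂μ) := fun x =>
    myaux_parametric μ ⟨fun p => K p.1 p.2 (x p.2), hKx x⟩
  -- the maximum of t ↦ ∫ L t s
  obtain ⟨t₀, -, ht₀⟩ := isCompact_univ.exists_isMaxOn Set.univ_nonempty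
    ((myaux_parametric μ ⟨fun p => L p.1 p.2, hLcont⟩).continuousOn)
  set c : ℝ := ∫ s, L t₀ s ∂μ with hcdef
  have hc1 : c < 1 := hint t₀
  have hc0 : 0 ≤ c := integral_nonneg fun s => (hLpos t₀ s).le
  have hcb : ∀ t, (∫ s, L t s ∂μ) ≤ c := fun t => ht₀ (Set.mem_univ t)
  -- the operator
  set Φ : C(X, B) → C(X, B) := fun x =>
    ⟨fun t => f t + ∫ s, K t s (x s) ∂μ, hf.add (hxcont x)⟩ with hΦ
  have hΦlip : ∀ x y : C(X, B), dist (Φ x) (Φ y) ≤ c * dist x y := by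
    intro x y
    rw [ContinuousMap.dist_le (mul_nonneg hc0 dist_nonneg)]
    intro t
    have hix : Integrable (fun s => K t s (x s)) μ :=
      myaux_integrable μ ((hKx x).comp (Continuous.prodMk_right t))
    have hiy : Integrable (fun s => K t s (y s)) μ :=
      myaux_integrable μ ((hKx y).comp (Continuous.prodMk_right t))
    have hd : dist (Φ x t) (Φ y t) = ‖∫ s, (K t s (x s) - K t s (y s)) ∂μ‖ := by
      simp [hΦ, dist_eq_norm, integral_sub hix hiy, add_sub_add_left_eq_sub]
    rw [hd]
    have hLt : Continuous (fun s => L t s) := hLcont.comp (Continuous.prodMk_right t)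
    calc ‖∫ s, (K t s (x s) - K t s (y s)) ∂μ‖
        ≤ ∫ s, ‖K t s (x s) - K t s (y s)‖ ∂μ := norm_integral_le_integral_norm _
      _ ≤ ∫ s, L t s * dist x y ∂μ := by
          refine integral_mono (myaux_integrable μ ?_)
            ((myaux_integrable μ hLt).mul_const _) (fun s => ?_)
          · exact ((hKx x).sub (hKx y)).norm.comp (Continuous.prodMk_right t)
          · refine (hLip t s (x s) (y s)).trans ?_
            have : ‖x s - y s‖ ≤ dist x y := by
              rw [← dist_eq_norm]; exact ContinuousMap.dist_apply_le_dist s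
            exact mul_le_mul_of_nonneg_left this (hLpos t s).le
      _ = (∫ s, L t s ∂μ) * dist x y := integral_mul_const _ _
      _ ≤ c * dist x y := mul_le_mul_of_nonneg_right (hcb t) dist_nonneg
  haveI : Nonempty C(X, B) := ⟨0⟩
  have hcontr : ContractingWith ⟨c, hc0⟩ Φ :=
    ⟨by exact_mod_cast hc1, LipschitzWith.of_dist_le_mul hΦlip⟩
  set x₀ : C(X, B) := ContractingWith.fixedPoint Φ hcontr with hx₀
  have hfix : Φ x₀ = x₀ := hcontr.fixedPoint_isFixedPt
  refine ⟨⇑x₀, ⟨x₀.continuous, fun t => ?_⟩, ?_⟩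
  · conv_lhs => rw [← hfix]
    rfl
  · rintro y ⟨hyc, hye⟩
    have hyfix : Φ ⟨y, hyc⟩ = ⟨y, hyc⟩ := ContinuousMap.ext fun t => (hye t).symm
    have h2 : (⟨y, hyc⟩ : C(X, B)) = x₀ := hcontr.fixedPoint_unique hyfix
    exact congrArg (fun g : C(X, B) => ⇑g) h2
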